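/- Let λ² be an eigenvalue of the Hermite operator H = -d²/dx² + x² and h the corresponding L²-normalized eigenfunction. Then for any δ ∈ [0,1], ‖(1+|x|)^δ h(x)‖_{L²(ℝ)} ≤ C λ^δ for a constant C independent of λ. -/

import Mathlib

open MeasureTheory Set Filter intervalIntegral

lemma boundaryA (h : ℝ → ℝ) (hd1 : Differentiable ℝ h)
    (hint : Integrable (fun x => (h x)^2)) (B : ℝ) :
    ∃ b : ℝ, B ≤ b ∧ h b * deriv h b - h (-b) * deriv h (-b) ≤ 0 := by
  by_contra hc
  push_neg at hc
  set B' : ℝ := max B 0 with hB'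
  set ψ : ℝ → ℝ := fun b => (h b)^2 + (h (-b))^2 with hψ
  have hder : ∀ b : ℝ, HasDerivAt ψ (2 * (h b * deriv h b - h (-b) * deriv h (-b))) b := by
    intro b
    have h1 : HasDerivAt (fun b => (h b)^2) (2 * h b ^ 1 * deriv h b) b :=
      ((hd1 b).hasDerivAt).pow 2
    have h2 : HasDerivAt (fun b : ℝ => h (-b)) (deriv h (-b) * (-1)) b :=
      (hd1 (-b)).hasDerivAt.comp b (hasDerivAt_neg b)
    have h3 : HasDerivAt (fun b : ℝ => (h (-b))^2) (2 * h (-b) ^ 1 * (deriv h (-b) * (-1))) b :=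
      h2.pow 2
    have := h1.add h3
    refine this.congr_deriv ?_
    ring
  have hcont : Continuous ψ := by
    have := hd1.continuous
    fun_prop
  have hmono : StrictMonoOn ψ (Ici B') := by
    apply strictMonoOn_of_deriv_pos (convex_Ici B')
    · exact hcont.continuousOn
    · intro x hx
      rw [interior_Ici] at hx
      rw [(hder x).deriv]
      have : 0 < h x * deriv h x - h (-x) * deriv h (-x) := hc x (le_trans (le_max_left _ _) hx.le)
      linarith
  have hc0 : 0 < ψ (B' + 1) := by
    have h1 : ψ B' < ψ (B' + 1) := hmono self_mem_Ici (by simp) (by linarith)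
    have h2 : 0 ≤ ψ B' := by positivity
    linarith
  have hint2 : Integrable ψ (volume.restrict (Ioi B')) := by
    have h1 : Integrable (fun b : ℝ => (h b)^2) (volume.restrict (Ioi B')) :=
      hint.integrableOn
    have h2 : Integrable (fun b : ℝ => (h (-b))^2) (volume.restrict (Ioi B')) :=
      (hint.comp_neg).integrableOn
    exact h1.add h2
  have hfin := hint2.measure_norm_ge_lt_top hc0
  have hsub : Ioi (B' + 1) ⊆ {x | ψ (B' + 1) ≤ ‖ψ x‖} := by
    intro x hx
    simp only [Set.mem_Ioi] at hx
    have h1 : ψ (B' + 1) < ψ x :=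
      hmono (by simp : (B':ℝ) + 1 ∈ Ici B') (by simp only [Set.mem_Ici]; linarith) hx
    have h2 : 0 ≤ ψ x := by positivity
    simp only [Set.mem_setOf_eq, Real.norm_eq_abs, abs_of_nonneg h2]
    linarith
  have htop : (volume.restrict (Ioi B')) (Ioi (B' + 1)) = ⊤ := by
    rw [Measure.restrict_apply measurableSet_Ioi, Set.Ioi_inter_Ioi]
    simp [Real.volume_Ioi]
  have := measure_mono hsub (μ := volume.restrict (Ioi B'))
  rw [htop, top_le_iff] at this
  rw [this] at hfin
  exact absurd hfin (lt_irrefl _)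

lemma intervalBound (lam : ℝ) (h : ℝ → ℝ)
    (hd1 : Differentiable ℝ h) (hd2 : Differentiable ℝ (deriv h))
    (hc2 : Continuous (deriv (deriv h)))
    (heq : ∀ x, -(deriv (deriv h) x) + x^2 * h x = lam^2 * h x)
    (hint : Integrable (fun x => (h x)^2)) (hnorm : (∫ x, (h x)^2) = 1)
    (b : ℝ) (hb0 : 0 ≤ b) (hbdry : h b * deriv h b - h (-b) * deriv h (-b) ≤ 0) :
    (∫ x in (-b)..b, x^2 * (h x)^2) ≤ lam^2 := by
  have hc1 : Continuous (deriv h) := hd2.continuous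
  have hc0 : Continuous h := hd1.continuous
  have hFTC : (∫ x in (-b)..b, ((deriv h x)^2 + x^2*(h x)^2 - lam^2*(h x)^2))
      = h b * deriv h b - h (-b) * deriv h (-b) := by
    apply integral_eq_sub_of_hasDerivAt (f := fun x => h x * deriv h x)
    · intro x _
      have := ((hd1 x).hasDerivAt).mul ((hd2 x).hasDerivAt)
      refine this.congr_deriv ?_
      have hdd : deriv (deriv h) x = x^2*h x - lam^2*h x := by linarith [heq x]
      rw [hdd]; ring
    · exact (Continuous.intervalIntegrable (by continuity) _ _)
  have hi1 : IntervalIntegrable (fun x => (deriv h x)^2) volume (-b) b :=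
    Continuous.intervalIntegrable (by continuity) _ _
  have hi2 : IntervalIntegrable (fun x => x^2*(h x)^2) volume (-b) b :=
    Continuous.intervalIntegrable (by continuity) _ _
  have hi3 : IntervalIntegrable (fun x => lam^2*(h x)^2) volume (-b) b :=
    Continuous.intervalIntegrable (by continuity) _ _
  have hsplit : (∫ x in (-b)..b, ((deriv h x)^2 + x^2*(h x)^2 - lam^2*(h x)^2))
      = (∫ x in (-b)..b, (deriv h x)^2) + (∫ x in (-b)..b, x^2*(h x)^2)
        - (∫ x in (-b)..b, lam^2*(h x)^2) := by
    rw [integral_sub (hi1.add hi2) hi3, integral_add hi1 hi2]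
  have hpos : 0 ≤ ∫ x in (-b)..b, (deriv h x)^2 :=
    integral_nonneg (by linarith) (fun x _ => sq_nonneg _)
  have hle1 : (∫ x in (-b)..b, (h x)^2) ≤ 1 := by
    rw [integral_of_le (by linarith)]
    rw [← hnorm]
    apply setIntegral_le_integral hint
    filter_upwards with x using sq_nonneg _
  have hconst : (∫ x in (-b)..b, lam^2*(h x)^2) = lam^2 * ∫ x in (-b)..b, (h x)^2 := by
    rw [intervalIntegral.integral_const_mul]
  have hl2 : lam^2 * (∫ x in (-b)..b, (h x)^2) ≤ lam^2 * 1 :=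
    mul_le_mul_of_nonneg_left hle1 (sq_nonneg _)
  nlinarith [hFTC, hsplit, hpos, hconst, hl2]

lemma globalBound (lam : ℝ) (h : ℝ → ℝ)
    (hd1 : Differentiable ℝ h) (hd2 : Differentiable ℝ (deriv h))
    (heq : ∀ x, -(deriv (deriv h) x) + x^2 * h x = lam^2 * h x)
    (hint : Integrable (fun x => (h x)^2)) (hnorm : (∫ x, (h x)^2) = 1) :
    Integrable (fun x => x^2 * (h x)^2) ∧ (∫ x, x^2 * (h x)^2) ≤ lam^2 := by
  have hc2 : Continuous (deriv (deriv h)) := by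
    have : Continuous (fun x => x^2 * h x - lam^2 * h x) := by
      have := hd1.continuous; fun_prop
    exact this.congr (fun x => by linarith [heq x])
  have hA : ∀ n : ℕ, ∃ b : ℝ, (n:ℝ) ≤ b ∧ h b * deriv h b - h (-b) * deriv h (-b) ≤ 0 :=
    fun n => boundaryA h hd1 hint n
  set bs : ℕ → ℝ := fun n => (hA n).choose with hbs
  have hbs1 : ∀ n : ℕ, (n:ℝ) ≤ bs n := fun n => (hA n).choose_spec.1
  have hbs2 : ∀ n : ℕ, h (bs n) * deriv h (bs n) - h (-(bs n)) * deriv h (-(bs n)) ≤ 0 :=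
    fun n => (hA n).choose_spec.2
  have hbs0 : ∀ n : ℕ, (0:ℝ) ≤ bs n := fun n => le_trans (by positivity) (hbs1 n)
  have htop : Tendsto bs atTop atTop :=
    tendsto_atTop_mono hbs1 tendsto_natCast_atTop_atTop
  have hbot : Tendsto (fun n => -(bs n)) atTop atBot := tendsto_neg_atBot_iff.mpr htop
  have hcontf : Continuous (fun x : ℝ => x^2 * (h x)^2) := by
    have := hd1.continuous; fun_prop
  have hbound : ∀ n : ℕ, (∫ x in (-(bs n))..(bs n), x^2 * (h x)^2) ≤ lam^2 := fun n =>
    intervalBound lam h hd1 hd2 hc2 heq hint hnorm (bs n) (hbs0 n) (hbs2 n)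
  have hfi : ∀ n : ℕ, IntegrableOn (fun x : ℝ => x^2 * (h x)^2) (Ioc (-(bs n)) (bs n)) :=
    fun n => hcontf.integrableOn_Ioc
  have hInt : Integrable (fun x : ℝ => x^2 * (h x)^2) := by
    apply integrable_of_intervalIntegral_norm_bounded (lam^2) hfi hbot htop
    filter_upwards with n
    have : (∫ x in (-(bs n))..(bs n), ‖x^2 * (h x)^2‖) = ∫ x in (-(bs n))..(bs n), x^2 * (h x)^2 := by
      apply intervalIntegral.integral_congr
      intro x _
      simp [Real.norm_eq_abs, abs_of_nonneg (by positivity : (0:ℝ) ≤ x^2 * (h x)^2)]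
    rw [this]
    exact hbound n
  refine ⟨hInt, ?_⟩
  have hT := intervalIntegral_tendsto_integral hInt hbot htop
  exact le_of_tendsto hT (Eventually.of_forall hbound)


/-- Weighted `L²` bound for Hermite eigenfunctions: for `δ ∈ [0,1]` there is `C > 0`
(independent of `λ`) such that if `h` is an `L²`-normalized eigenfunction of the
harmonic oscillator `-d²/dx² + x²` with eigenvalue `λ² ≥ 1`, then
`‖(1+|x|)^δ h‖_{L²(ℝ)} ≤ C λ^δ`. -/
theorem stmt12 (δ : ℝ) (hδ : δ ∈ Set.Icc (0:ℝ) 1) :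
    ∃ C : ℝ, 0 < C ∧ ∀ lam : ℝ, 1 ≤ lam → ∀ h : ℝ → ℝ, ContDiff ℝ 2 h →
      (∀ x, -(deriv (deriv h) x) + x^2 * h x = lam^2 * h x) →
      Integrable (fun x => (h x)^2) →
      (∫ x, (h x)^2) = 1 →
      (∫ x, ((1+|x|) ^ δ * h x)^2) ≤ (C * lam ^ δ)^2 := by
  obtain ⟨hδ0, hδ1⟩ := hδ
  refine ⟨3, by norm_num, ?_⟩
  intro lam hlam h hh heq hint hnorm
  have hlam0 : (0:ℝ) < lam := lt_of_lt_of_le one_pos hlam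
  have hd1 : Differentiable ℝ h := hh.differentiable (by norm_num)
  have hd2 : Differentiable ℝ (deriv h) := by
    have : ContDiff ℝ (1+1 : WithTop ℕ∞) h := by norm_num at hh ⊢; exact hh
    exact ((contDiff_succ_iff_deriv.mp this).2.2).differentiable (by norm_num)
  obtain ⟨hX, hXle⟩ := globalBound lam h hd1 hd2 heq hint hnorm
  set c1 : ℝ := lam^(δ*2) + 2*lam^(δ*2-2) with hc1
  set c2 : ℝ := 2*lam^(δ*2-2) with hc2
  have hr1 : (0:ℝ) ≤ lam^(δ*2) := Real.rpow_nonneg hlam0.le _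
  have hr2 : (0:ℝ) ≤ lam^(δ*2-2) := Real.rpow_nonneg hlam0.le _
  -- pointwise scalar bound
  have hscal : ∀ x : ℝ, (1+|x|)^(δ*2) ≤ c1 + c2 * x^2 := by
    intro x
    have ha1 : (1:ℝ) ≤ 1 + |x| := le_add_of_nonneg_right (abs_nonneg x)
    have ha0 : (0:ℝ) < 1 + |x| := by positivity
    rcases le_total (1+|x|) lam with hcase | hcase
    · have : (1+|x|)^(δ*2) ≤ lam^(δ*2) :=
        Real.rpow_le_rpow ha0.le hcase (by linarith)
      have h2 : 0 ≤ c2 * x^2 := by positivity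
      rw [hc1]; nlinarith
    · have e1 : (1+|x|)^(δ*2) = (1+|x|)^(δ*2-2) * (1+|x|)^2 := by
        rw [show δ*2 = (δ*2-2)+2 by ring, Real.rpow_add ha0, Real.rpow_two]
        ring_nf
      have e2 : (1+|x|)^(δ*2-2) ≤ lam^(δ*2-2) :=
        Real.rpow_le_rpow_of_nonpos hlam0 hcase (by linarith)
      have e3 : (1+|x|)^2 ≤ 2*(1+x^2) := by
        have := abs_nonneg x
        have h4 : |x|^2 = x^2 := sq_abs x
        nlinarith [sq_nonneg (|x| - 1)]
      have e4 : (1+|x|)^(δ*2) ≤ lam^(δ*2-2) * (2*(1+x^2)) := by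
        rw [e1]
        apply mul_le_mul e2 e3 (by positivity) hr2
      rw [hc1, hc2]; nlinarith
  -- pointwise bound on integrands
  have hptw : ∀ x : ℝ, ((1+|x|)^δ * h x)^2 ≤ c1 * (h x)^2 + c2 * (x^2 * (h x)^2) := by
    intro x
    have ha0 : (0:ℝ) ≤ 1 + |x| := by positivity
    have e0 : ((1+|x|)^δ * h x)^2 = (1+|x|)^(δ*2) * (h x)^2 := by
      rw [mul_pow, ← Real.rpow_two ((1+|x|)^δ), ← Real.rpow_mul ha0]
    rw [e0]
    have := mul_le_mul_of_nonneg_right (hscal x) (sq_nonneg (h x))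
    nlinarith [this]
  have hG : Integrable (fun x => c1 * (h x)^2 + c2 * (x^2 * (h x)^2)) :=
    (hint.const_mul c1).add (hX.const_mul c2)
  have hmono : (∫ x, ((1+|x|)^δ * h x)^2) ≤ ∫ x, (c1 * (h x)^2 + c2 * (x^2 * (h x)^2)) := by
    apply integral_mono_of_nonneg
    · filter_upwards with x using sq_nonneg _
    · exact hG
    · filter_upwards with x using hptw x
  have hGval : (∫ x, (c1 * (h x)^2 + c2 * (x^2 * (h x)^2)))
      = c1 + c2 * ∫ x, x^2 * (h x)^2 := by
    rw [integral_add (hint.const_mul c1) (hX.const_mul c2),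
      MeasureTheory.integral_const_mul, MeasureTheory.integral_const_mul, hnorm, mul_one]
  have hfin : c1 + c2 * (∫ x, x^2 * (h x)^2) ≤ (3 * lam^δ)^2 := by
    have h5 : c2 * (∫ x, x^2 * (h x)^2) ≤ c2 * lam^2 :=
      mul_le_mul_of_nonneg_left hXle (by positivity)
    have h6 : lam^(δ*2-2) * lam^2 = lam^(δ*2) := by
      rw [← Real.rpow_two lam, ← Real.rpow_add hlam0]
      ring_nf
    have h7 : lam^(δ*2-2) ≤ lam^(δ*2) :=
      Real.rpow_le_rpow_of_exponent_le hlam (by linarith)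
    have h8 : (3 * lam^δ)^2 = 9 * lam^(δ*2) := by
      rw [mul_pow, ← Real.rpow_two (lam^δ), ← Real.rpow_mul hlam0.le]
      norm_num
    rw [h8, hc1, hc2]
    nlinarith
  calc (∫ x, ((1+|x|)^δ * h x)^2) ≤ _ := hmono
    _ = _ := hGval
    _ ≤ _ := hfin
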